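/- If v: ℕ⁴ → ℝ₊ belongs to I₁ ∩ C₂ and satisfies property (i) of class B, then inequality (4), namely v(b+2ℓ₂−ℓ₁) − v(b+ℓ₂−ℓ₁) ≥ v(b+ℓ₂−ℓ₁) − v(b), holds for all b of the form b = (1,0,β,0) + eᵢ with β ≥ 0 and i ∈ {0,1,2,3} (i.e. also for i = 1, not just i ∈ {0,2,3}). -/
import Mathlib


open Finset Filter

abbrev St := Fin 4 → ℕ

def ev (i : Fin 4) : St := fun j => if j = i then 1 else 0

def l1 : St := ev 0 + ev 1
def l2 : St := ev 1 + ev 2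
def l3 : St := ev 2 + ev 3

def IsMatching (x m : St) : Prop :=
  (∃ n1 n2 n3 : ℕ, m = n1 • l1 + n2 • l2 + n3 • l3) ∧ ∀ i, m i ≤ x i

noncomputable def Ev (μ : Fin 4 → ℝ) (v : St → ℝ) (y : St) : ℝ :=
  ∑ i, μ i * v (y + ev i)

noncomputable def Lg (μ : Fin 4 → ℝ) (c v : St → ℝ) (γ : ℝ) (x : St) : ℝ :=
  c x + γ * sInf {s : ℝ | ∃ m : St, IsMatching x m ∧ s = Ev μ v (x - m)}

def IsProb (μ : Fin 4 → ℝ) : Prop := (∀ i, 0 ≤ μ i) ∧ ∑ i, μ i = 1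

def costF (c0 c1 c2 c3 : ℝ) : St → ℝ := fun x => c0 * x 0 + c1 * x 1 + c2 * x 2 + c3 * x 3

def I1 (v : St → ℝ) : Prop := ∀ x, v x ≤ v (x + l1)
def I3 (v : St → ℝ) : Prop := ∀ x, v x ≤ v (x + l3)
def Iprime (v : St → ℝ) : Prop := ∀ x : St, 0 < x 1 → 0 < x 2 →
  v x ≤ v (x + l1 - l2) ∧ v x ≤ v (x + l3 - l2)
def Conv2 (v : St → ℝ) : Prop := ∀ x : St, x 0 ≤ x 1 + 1 → x 3 ≤ x 2 + 1 →
  v (x + l2) - v x ≤ v (x + 2 • l2) - v (x + l2)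

def kk (t : ℕ∞) (x : St) : ℕ :=
  match t with
  | ⊤ => 0
  | (n : ℕ) => (min ((x 1 : ℤ) - x 0) ((x 2 : ℤ) - x 3) - n).toNat

def ii (x : St) : ℤ := ((x 1 : ℤ) - x 0) - ((x 2 : ℤ) - x 3)

def mstar (T : ℤ → ℕ∞) (x : St) : St :=
  min (x 0) (x 1) • l1 + kk (T (ii x)) x • l2 + min (x 2) (x 3) • l3


def ClassB (v : St → ℝ) : Prop :=
  (∀ (β : ℕ) (i : Fin 4), i ≠ 1 →
    v ((![1,0,β,0] + ev i) + l2 - l1) - v (![1,0,β,0] + ev i)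
      ≤ v ((![1,0,β,0] + ev i) + 2 • l2 - l1) - v ((![1,0,β,0] + ev i) + l2 - l1)) ∧
  (∀ (β : ℕ) (i : Fin 4), i ≠ 2 →
    v ((![0,β,0,1] + ev i) + l2 - l3) - v (![0,β,0,1] + ev i)
      ≤ v ((![0,β,0,1] + ev i) + 2 • l2 - l3) - v ((![0,β,0,1] + ev i) + l2 - l3)) ∧
  (∀ i : Fin 4,
    v ((![1,0,0,1] + ev i) + l2 - l1 - l3) - v (![1,0,0,1] + ev i)
      ≤ v ((![1,0,0,1] + ev i) + 2 • l2 - l1 - l3) - v ((![1,0,0,1] + ev i) + l2 - l1 - l3))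

def ClassC' (v : St → ℝ) : Prop :=
  (∀ (α β : ℕ) (i : Fin 4), 2 ≤ α →
    v ((![α,0,β,0] + ev i) + l2 - l1) - v (![α,0,β,0] + ev i)
      ≤ v ((![α,0,β,0] + ev i) + 2 • l2 - 2 • l1) - v ((![α,0,β,0] + ev i) + l2 - l1)) ∧
  (∀ (α : ℕ) (i : Fin 4), 2 ≤ α →
    v ((![α,0,0,1] + ev i) + l2 - l1 - l3) - v (![α,0,0,1] + ev i)
      ≤ v ((![α,0,0,1] + ev i) + 2 • l2 - 2 • l1 - l3) - v ((![α,0,0,1] + ev i) + l2 - l1 - l3)) ∧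
  (∀ (α β : ℕ) (i : Fin 4), 2 ≤ α →
    v ((![0,β,0,α] + ev i) + l2 - l3) - v (![0,β,0,α] + ev i)
      ≤ v ((![0,β,0,α] + ev i) + 2 • l2 - 2 • l3) - v ((![0,β,0,α] + ev i) + l2 - l3)) ∧
  (∀ (α : ℕ) (i : Fin 4), 2 ≤ α →
    v ((![1,0,0,α] + ev i) + l2 - l3 - l1) - v (![1,0,0,α] + ev i)
      ≤ v ((![1,0,0,α] + ev i) + 2 • l2 - 2 • l3 - l1) - v ((![1,0,0,α] + ev i) + l2 - l3 - l1)) ∧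
  (∀ (α β : ℕ) (i : Fin 4), 2 ≤ α → 2 ≤ β →
    v ((![α,0,0,β] + ev i) + l2 - l1 - l3) - v (![α,0,0,β] + ev i)
      ≤ v ((![α,0,0,β] + ev i) + 2 • l2 - 2 • l1 - 2 • l3) - v ((![α,0,0,β] + ev i) + l2 - l1 - l3))

def traj (u : ℕ → St → St) (x : St) (a : ℕ → Fin 4) : ℕ → St
  | 0 => x
  | n + 1 => u n (traj u x a n) + ev (a (n + 1))

def Adm (u : ℕ → St → St) : Prop := ∀ n x, ∃ m : St, IsMatching x m ∧ u n x = x - m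

def ext (p : ℕ) (s : Fin p → Fin 4) : ℕ → Fin 4 :=
  fun n => if h : n - 1 < p then s ⟨n - 1, h⟩ else 0

noncomputable def wt : St → ℝ := fun x => x 0 + x 1 + x 2 + x 3 + 1

theorem stmt6 (v : St → ℝ) (hv : ∀ x, 0 ≤ v x) (hI1 : I1 v) (hC : Conv2 v)
    (hB : ∀ (β : ℕ) (i : Fin 4), i ≠ 1 →
      v ((![1,0,β,0] + ev i) + l2 - l1) - v (![1,0,β,0] + ev i)
        ≤ v ((![1,0,β,0] + ev i) + 2 • l2 - l1) - v ((![1,0,β,0] + ev i) + l2 - l1)) :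
    ∀ (β : ℕ) (i : Fin 4),
      v ((![1,0,β,0] + ev i) + l2 - l1) - v (![1,0,β,0] + ev i)
        ≤ v ((![1,0,β,0] + ev i) + 2 • l2 - l1) - v ((![1,0,β,0] + ev i) + l2 - l1) := by
  intro β i
  by_cases h : i = 1
  · subst h
    have h1 : v (![0,0,β,0]) ≤ v (![0,0,β,0] + l1) := hI1 _
    have h2 := hC ![0,0,β,0] (by simp [Matrix.cons_val_zero, Matrix.cons_val_one]) (by simp)
    have e0 : (![1,0,β,0] + ev 1 : St) = ![0,0,β,0] + l1 := by
      funext j; fin_cases j <;> simp [ev, l1, Matrix.cons_val_zero, Matrix.cons_val_one] <;> rfl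
    have e1 : ((![1,0,β,0] + ev 1) + l2 - l1 : St) = ![0,0,β,0] + l2 := by
      funext j; fin_cases j <;> rfl
    have e2 : ((![1,0,β,0] + ev 1) + 2 • l2 - l1 : St) = ![0,0,β,0] + 2 • l2 := by
      funext j; fin_cases j <;> rfl
    rw [e1, e2, e0]
    linarith
  · exact hB β i h
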